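/- For all t ∈ [0,1], Ψ₂(t) − Ψ₁(t) = 2·(t²(1−τ*)²/(1−t))·ρ_{FG} for t < τ*, and Ψ₂(t) − Ψ₁(t) = 2(1−t)(τ*)²·ρ_{FG} for t ≥ τ*. In particular, for every t ∈ (0,1) with t ≠ τ* (and also t = τ*), Ψ₂(t) − Ψ₁(t) has the same sign as ρ_{FG} (it is positive if ρ_{FG} > 0, zero if ρ_{FG} = 0, negative if ρ_{FG} < 0). -/
import Mathlib


/-- The difference of the two limit functions `Ψ₂ - Ψ₁` and its sign, determined by the
eccentricity `ρ`. -/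
theorem psi2_sub_psi1
    (θF θG ρ τ : ℝ) (hτ : τ ∈ Set.Ioo (0 : ℝ) 1)
    (Ψ₁ Ψ₂ : ℝ → ℝ)
    (hΨ₁ : ∀ t : ℝ, Ψ₁ t =
      if t < τ then t * (1 - τ) * (θF - θG) - 2 * t * τ * (1 - τ) * ρ
      else (1 - t) * τ * (θF - θG) + 2 * ((t - τ) / t) * τ * ρ - 2 * t * τ * (1 - τ) * ρ)
    (hΨ₂ : ∀ t : ℝ, Ψ₂ t =
      if t < τ then t * (1 - τ) * (θF - θG) - 2 * (t * (τ - t) / (1 - t)) * (1 - τ) * ρ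
      else (1 - t) * τ * (θF - θG) + 2 * ((t - τ) / t) * τ * ρ - 2 * (t - τ) * τ * ρ) :
    (∀ t ∈ Set.Icc (0 : ℝ) 1,
      Ψ₂ t - Ψ₁ t =
        if t < τ then 2 * (t ^ 2 * (1 - τ) ^ 2 / (1 - t)) * ρ
        else 2 * (1 - t) * τ ^ 2 * ρ)
    ∧ (∀ t ∈ Set.Ioo (0 : ℝ) 1,
        (0 < ρ → 0 < Ψ₂ t - Ψ₁ t)
        ∧ (ρ = 0 → Ψ₂ t - Ψ₁ t = 0)
        ∧ (ρ < 0 → Ψ₂ t - Ψ₁ t < 0)) := by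
  have key : ∀ t ∈ Set.Icc (0 : ℝ) 1,
      Ψ₂ t - Ψ₁ t =
        if t < τ then 2 * (t ^ 2 * (1 - τ) ^ 2 / (1 - t)) * ρ
        else 2 * (1 - t) * τ ^ 2 * ρ := by
    intro t ht
    rw [hΨ₁ t, hΨ₂ t]
    by_cases h : t < τ
    · simp only [if_pos h]
      have h1 : (1 : ℝ) - t ≠ 0 := by nlinarith [hτ.2]
      field_simp
      ring
    · simp only [if_neg h]
      ring
  refine ⟨key, fun t ht => ?_⟩
  rw [key t ⟨le_of_lt ht.1, le_of_lt ht.2⟩]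
  by_cases h : t < τ
  · simp only [if_pos h]
    have h1 : (0:ℝ) < 1 - t := by linarith [ht.2]
    have h3 : (0:ℝ) < t := ht.1
    have h4 : (0:ℝ) < 1 - τ := by linarith [hτ.2]
    have h2 : (0:ℝ) < t ^ 2 * (1 - τ) ^ 2 / (1 - t) := by positivity
    have h5 : (0:ℝ) < 2 * (t ^ 2 * (1 - τ) ^ 2 / (1 - t)) := by positivity
    exact ⟨fun hρ => mul_pos h5 hρ, fun hρ => by simp [hρ],
      fun hρ => mul_neg_of_pos_of_neg h5 hρ⟩
  · simp only [if_neg h]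
    have h1 : (0:ℝ) < 1 - t := by linarith [ht.2]
    have h2 : (0:ℝ) < τ := hτ.1
    have h5 : (0:ℝ) < 2 * (1 - t) * τ ^ 2 := by positivity
    exact ⟨fun hρ => mul_pos h5 hρ, fun hρ => by simp [hρ],
      fun hρ => mul_neg_of_pos_of_neg h5 hρ⟩
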